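/- Let p be a prime number with p ≠ 3. The polynomial x³ − 3x + 1 is irreducible over the field 𝔽_p = ℤ/pℤ if and only if p is congruent to 2, 4, 5 or 7 modulo 9. (Equivalently: p is inert in the cubic field ℚ(ζ₉ + ζ₉⁻¹), the maximal real subfield of the 9th cyclotomic field, exactly for these congruence classes.) -/

import Mathlib

open Polynomial

/-- Any element of a field over `ZMod p` fixed by Frobenius lies in the prime field. -/
lemma aux_mem_range_of_pow_card {p : ℕ} (hp : p.Prime) {F : Type*} [Field F]
    [Algebra (ZMod p) F] {x : F} (hx : x ^ p = x) :
    ∃ b : ZMod p, algebraMap (ZMod p) F b = x := by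
  haveI := Fact.mk hp
  classical
  set g : F[X] := X ^ p - X with hg
  have hg0 : g ≠ 0 := FiniteField.X_pow_card_sub_X_ne_zero F hp.one_lt
  have hdeg : g.natDegree = p := FiniteField.X_pow_card_sub_X_natDegree_eq F hp.one_lt
  have hroots : g.roots.toFinset.card ≤ p := by
    refine le_trans (Multiset.toFinset_card_le _) ?_
    have := Polynomial.card_roots' g
    omega
  set T : Finset F := Finset.image (algebraMap (ZMod p) F) Finset.univ with hT
  have hTcard : T.card = p := by
    rw [hT, Finset.card_image_of_injective _ (algebraMap (ZMod p) F).injective,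
      Finset.card_univ, ZMod.card]
  have hsub : T ⊆ g.roots.toFinset := by
    intro y hy
    simp only [hT, Finset.mem_image] at hy
    obtain ⟨b, -, rfl⟩ := hy
    have hb : (algebraMap (ZMod p) F b) ^ p = algebraMap (ZMod p) F b := by
      rw [← map_pow, ZMod.pow_card]
    simp [Multiset.mem_toFinset, mem_roots hg0, IsRoot, hg, hb, FiniteField.X_pow_card_sub_X_ne_zero F hp.one_lt]
  have heq : T = g.roots.toFinset :=
    Finset.eq_of_subset_of_card_le hsub (by rw [hTcard]; exact hroots)
  have hxmem : x ∈ g.roots.toFinset := by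
    simp [Multiset.mem_toFinset, mem_roots hg0, IsRoot, hg, hx, FiniteField.X_pow_card_sub_X_ne_zero F hp.one_lt]
  rw [← heq] at hxmem
  simp only [hT, Finset.mem_image] at hxmem
  obtain ⟨b, -, hb⟩ := hxmem
  exact ⟨b, hb⟩

/-- The minimal polynomial of `ζ₉ + ζ₉⁻¹` is irreducible modulo a prime
`p ≠ 3` if and only if `p ≡ 2, 4, 5, 7 (mod 9)`. -/
theorem irreducible_cubic_nine
    (p : ℕ) (hp : p.Prime) (hp3 : p ≠ 3) :
    Irreducible (X ^ 3 - 3 * X + 1 : (ZMod p)[X]) ↔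
      (p % 9 = 2 ∨ p % 9 = 4 ∨ p % 9 = 5 ∨ p % 9 = 7) := by
  haveI := Fact.mk hp
  set F := AlgebraicClosure (ZMod p) with hF
  have hp2 : 2 ≤ p := hp.two_le
  have h3F : (3 : F) ≠ 0 := by
    intro h
    have := (CharP.cast_eq_zero_iff F p 3).mp h
    exact hp3 ((Nat.prime_dvd_prime_iff_eq hp Nat.prime_three).mp this)
  -- reduce irreducibility to the nonexistence of roots
  set f : (ZMod p)[X] := X ^ 3 - 3 * X + 1 with hf
  have hfdeg : f.natDegree = 3 := by
    rw [hf]; compute_degree!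
  have hf0 : f ≠ 0 := fun h => by simp [h] at hfdeg
  have heval : ∀ b : ZMod p, f.eval b = b ^ 3 - 3 * b + 1 := by
    intro b; simp [hf]
  have hiff : Irreducible f ↔ ∀ b : ZMod p, b ^ 3 - 3 * b + 1 ≠ 0 := by
    rw [irreducible_iff_roots_eq_zero_of_degree_le_three (by omega) (by omega)]
    rw [Multiset.eq_zero_iff_forall_notMem]
    constructor
    · intro h b hb
      exact h b ((mem_roots hf0).mpr (by simp [IsRoot, heval b, hb]))
    · intro h b hb
      exact h b (by have := (mem_roots hf0).mp hb; rwa [IsRoot, heval b] at this)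
  rw [hiff]
  constructor
  · -- no root → congruence. Contrapositive: p ≡ ±1 mod 9 → root exists.
    intro hnoroot
    by_contra hcon
    push_neg at hcon
    have h3p : ¬ (3 ∣ p) := by
      intro h
      exact hp3 ((Nat.prime_dvd_prime_iff_eq Nat.prime_three hp).mp h).symm
    have hmod : p % 9 = 1 ∨ p % 9 = 8 := by omega
    -- get a primitive 9th root of unity
    have hgdeg : (X ^ 6 + X ^ 3 + 1 : F[X]).natDegree = 6 := by compute_degree!
    obtain ⟨ζ, hζ⟩ := IsAlgClosed.exists_root (X ^ 6 + X ^ 3 + 1 : F[X]) (by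
      intro h
      have h0 : (X ^ 6 + X ^ 3 + 1 : F[X]) ≠ 0 := fun hz => by simp [hz] at hgdeg
      rw [Polynomial.degree_eq_natDegree h0, hgdeg] at h
      exact absurd h (by norm_num))
    have hζ6 : ζ ^ 6 + ζ ^ 3 + 1 = 0 := by simpa [IsRoot] using hζ
    have hζ9 : ζ ^ 9 = 1 := by linear_combination (ζ ^ 3 - 1) * hζ6
    set β : F := ζ + ζ ^ 8 with hβ
    have hmod9 : ζ ^ p = ζ ^ (p % 9) := by
      have hsplit : ζ ^ p = ζ ^ (9 * (p / 9) + p % 9) := by rw [Nat.div_add_mod]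
      rw [hsplit, pow_add, pow_mul, hζ9, one_pow, one_mul]
    have hβroot : β ^ 3 - 3 * β + 1 = 0 := by
      rw [hβ]
      linear_combination hζ6 + (3 * ζ + 3 * ζ ^ 8 + ζ ^ 6 * (ζ ^ 9 + 1)) * hζ9
    have hβp : β ^ p = β := by
      rw [hβ, add_pow_char]
      have h8 : (ζ ^ 8) ^ p = (ζ ^ p) ^ 8 := by rw [← pow_mul, mul_comm, pow_mul]
      rcases hmod with h | h
      · rw [h8, hmod9, h, pow_one]
      · rw [h8, hmod9, h]
        have h64 : (ζ ^ 8) ^ 8 = ζ := by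
          have h' : (ζ ^ 8) ^ 8 = (ζ ^ 9) ^ 7 * ζ := by ring
          rw [h', hζ9, one_pow, one_mul]
        rw [h64, add_comm]
    obtain ⟨b, hb⟩ := aux_mem_range_of_pow_card hp hβp
    refine hnoroot b ?_
    have hmapped : algebraMap (ZMod p) F (b ^ 3 - 3 * b + 1) = β ^ 3 - 3 * β + 1 := by
      simp [map_sub, map_add, map_mul, map_pow, map_ofNat, hb]
    rw [hβroot] at hmapped
    exact (map_eq_zero_iff _ (algebraMap (ZMod p) F).injective).mp hmapped
  · -- congruence → no root
    intro hmod b hb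
    set β : F := algebraMap (ZMod p) F b with hβdef
    have hqdeg : (X ^ 2 - C β * X + 1 : F[X]).natDegree = 2 := by compute_degree!
    obtain ⟨ζ, hζ⟩ := IsAlgClosed.exists_root (X ^ 2 - C β * X + 1 : F[X]) (by
      intro h
      have h0 : (X ^ 2 - C β * X + 1 : F[X]) ≠ 0 := fun hz => by simp [hz] at hqdeg
      rw [Polynomial.degree_eq_natDegree h0, hqdeg] at h
      exact absurd h (by norm_num))
    have hζq : ζ ^ 2 - β * ζ + 1 = 0 := by simpa [IsRoot] using hζ
    have hβroot : β ^ 3 - 3 * β + 1 = 0 := by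
      have h := congrArg (algebraMap (ZMod p) F) hb
      simpa [map_sub, map_add, map_mul, map_pow, map_ofNat, hβdef] using h
    have hζ6 : ζ ^ 6 + ζ ^ 3 + 1 = 0 := by
      linear_combination (ζ ^ 4 + ζ ^ 3 * β + ζ ^ 2 * β ^ 2 - ζ ^ 2 + ζ * β + 1) * hζq
        + ζ ^ 3 * hβroot
    have hζ9 : ζ ^ 9 = 1 := by linear_combination (ζ ^ 3 - 1) * hζ6
    have hζ0 : ζ ≠ 0 := by
      intro h; rw [h] at hζq; simp at hζq
    have hζ3 : ζ ^ 3 ≠ 1 := by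
      intro h
      exact h3F (by linear_combination hζ6 - (ζ ^ 3 + 2) * h)
    have hord : orderOf ζ = 9 := by
      have hdvd : orderOf ζ ∣ 9 := orderOf_dvd_of_pow_eq_one hζ9
      have hle : orderOf ζ ≤ 9 := Nat.le_of_dvd (by norm_num) hdvd
      have h1 : orderOf ζ ≠ 1 := by
        intro h
        exact hζ3 (by rw [orderOf_eq_one_iff.mp h, one_pow])
      have h3 : orderOf ζ ≠ 3 := by
        intro h
        exact hζ3 (by rw [← h]; exact pow_orderOf_eq_one ζ)
      interval_cases h : orderOf ζ <;> omega
    -- Frobenius sends ζ to ζ or β - ζ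
    have hβp : β ^ p = β := by rw [hβdef, ← map_pow, ZMod.pow_card]
    have hfrob : (ζ ^ p) ^ 2 - β * ζ ^ p + 1 = 0 := by
      have h := congrArg (frobenius F p) hζq
      simpa [map_sub, map_add, map_mul, map_pow, map_one, map_zero, frobenius_def, hβp] using h
    have hcases : ζ ^ p = ζ ∨ ζ ^ p = β - ζ := by
      have h : (ζ ^ p - ζ) * (ζ ^ p - (β - ζ)) = 0 := by
        linear_combination hfrob - hζq
      rcases mul_eq_zero.mp h with h | h
      · exact Or.inl (sub_eq_zero.mp h)
      · exact Or.inr (sub_eq_zero.mp h)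
    rcases hcases with h | h
    · have hpow : ζ ^ (p - 1) = 1 := by
        have h' : ζ ^ (p - 1) * ζ = 1 * ζ := by
          rw [← pow_succ, Nat.sub_add_cancel (by omega), h, one_mul]
        exact mul_right_cancel₀ hζ0 h'
      have hd := orderOf_dvd_of_pow_eq_one hpow
      rw [hord] at hd
      omega
    · have hprod : (β - ζ) * ζ = 1 := by linear_combination -hζq
      have hpow : ζ ^ (p + 1) = 1 := by
        rw [pow_succ, h, hprod]
      have hd := orderOf_dvd_of_pow_eq_one hpow
      rw [hord] at hd
      omega
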